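/- The measure on ℝ² with density t ↦ |y₃|²/(π |t - y|⁴) with respect to the planar Lebesgue measure, where y = (y₁,y₂,y₃) ∈ ℝ³ with y₃ ≠ 0 and t ∈ ℝ² is identified with (t₁,t₂,0) ∈ ℝ³, is a probability measure: its total mass is 1. -/

import Mathlib

open MeasureTheory Real Set Filter

lemma radial_integral (c : ℝ) (hc : 0 < c) :
    ∫ r in Set.Ioi (0:ℝ), r / (r ^ 2 + c) ^ 2 = 1 / (2 * c) := by
  have key := integral_Ioi_of_hasDerivAt_of_nonneg'
    (g := fun r : ℝ => -(2 * (r ^ 2 + c))⁻¹)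
    (g' := fun r : ℝ => r / (r ^ 2 + c) ^ 2) (a := 0) (l := 0)
    (fun x _ => by
      have hne : 2 * (x ^ 2 + c) ≠ 0 := by positivity
      have h1 : HasDerivAt (fun r : ℝ => 2 * (r ^ 2 + c)) (2 * (2 * x)) x := by
        have := ((hasDerivAt_pow 2 x).add_const c).const_mul 2
        simpa using this
      have := (h1.inv hne).neg
      convert this using 1
      · rfl
      · rfl
      · rfl
      field_simp)
    (fun x hx => div_nonneg hx.le (by positivity))
    (by
      have h1 : Tendsto (fun r : ℝ => 2 * (r ^ 2 + c)) atTop atTop := by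
        apply Filter.Tendsto.const_mul_atTop (by norm_num)
        exact tendsto_atTop_add_const_right _ c (tendsto_pow_atTop (by norm_num))
      simpa using (h1.inv_tendsto_atTop).neg)
  simpa using key

theorem balayage_density_total_mass_one (y₁ y₂ y₃ : ℝ) (hy : y₃ ≠ 0) :
    (∫ t : ℝ × ℝ,
        y₃ ^ 2 / (Real.pi * ((t.1 - y₁) ^ 2 + (t.2 - y₂) ^ 2 + y₃ ^ 2) ^ 2))
    = 1 := by
  have hc : 0 < y₃ ^ 2 := by positivity
  have hπ := Real.pi_pos
  set f : ℝ × ℝ → ℝ := fun t => y₃ ^ 2 / (Real.pi * (t.1 ^ 2 + t.2 ^ 2 + y₃ ^ 2) ^ 2) with hfdef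
  have h1 : (∫ t : ℝ × ℝ, y₃ ^ 2 / (Real.pi * ((t.1 - y₁) ^ 2 + (t.2 - y₂) ^ 2 + y₃ ^ 2) ^ 2))
      = ∫ t : ℝ × ℝ, f (t - (y₁, y₂)) := rfl
  rw [h1, integral_sub_right_eq_self f (y₁, y₂), ← integral_comp_polarCoord_symm]
  have h2 : ∀ p : ℝ × ℝ, p.1 • f (polarCoord.symm p)
      = (fun r : ℝ => r * (y₃ ^ 2 / (Real.pi * (r ^ 2 + y₃ ^ 2) ^ 2))) p.1 * (fun _ : ℝ => (1:ℝ)) p.2 := by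
    intro p
    have : (p.1 * Real.cos p.2) ^ 2 + (p.1 * Real.sin p.2) ^ 2 = p.1 ^ 2 := by
      rw [mul_pow, mul_pow, ← mul_add, Real.cos_sq_add_sin_sq, mul_one]
    simp [f, polarCoord_symm_apply, smul_eq_mul, this]
  rw [integral_congr_ae (Filter.Eventually.of_forall fun p => h2 p)]
  rw [polarCoord_target, Measure.volume_eq_prod, setIntegral_prod_mul (fun r : ℝ => r * (y₃ ^ 2 / (Real.pi * (r ^ 2 + y₃ ^ 2) ^ 2))) (fun _ : ℝ => (1:ℝ)) (Set.Ioi 0) (Set.Ioo (-Real.pi) Real.pi)]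
  have h3 : ∫ r in Set.Ioi (0:ℝ), r * (y₃ ^ 2 / (Real.pi * (r ^ 2 + y₃ ^ 2) ^ 2))
      = (y₃ ^ 2 / Real.pi) * ∫ r in Set.Ioi (0:ℝ), r / (r ^ 2 + y₃ ^ 2) ^ 2 := by
    rw [← integral_const_mul]
    congr 1
    ext r
    field_simp
  rw [h3, radial_integral _ hc]
  simp only [integral_const, MeasurableSet.univ, Measure.restrict_apply, Set.univ_inter,
    Real.volume_Ioo, smul_eq_mul, mul_one]
  rw [measureReal_restrict_apply_univ, Real.volume_real_Ioo_of_le (by linarith)]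
  field_simp
  ring
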